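/- Let x, y be strings of the same length n over an alphabet Σ and let u, v be strings of the same length ℓ over Σ. Suppose no symbol occurs in both u and v, no symbol occurs in both u and y, and no symbol occurs in both v and x. Then ED(x ∘ u, y ∘ v) = ED(x, y) + ℓ. -/

import Mathlib

open List

/-- Cost structure for the Levenshtein distance (as formerly in Mathlib). -/
structure Levenshtein.Cost (α β δ : Type*) where
  delete : α → δ
  insert : β → δ
  substitute : α → β → δ

/-- The default cost: unit deletions, insertions and substitutions (as formerly in Mathlib). -/
def Levenshtein.defaultCost {α : Type*} [DecidableEq α] : Levenshtein.Cost α α ℕ where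
  delete _ := 1
  insert _ := 1
  substitute a b := if a = b then 0 else 1

/-- The Levenshtein distance, by its defining recursion (formerly in Mathlib). -/
def levenshtein {α β δ : Type*} [AddZeroClass δ] [Min δ] (C : Levenshtein.Cost α β δ) :
    List α → List β → δ
  | [], [] => 0
  | [], y :: ys => C.insert y + levenshtein C [] ys
  | x :: xs, [] => C.delete x + levenshtein C xs []
  | x :: xs, y :: ys =>
    min (C.delete x + levenshtein C xs (y :: ys))
      (min (C.insert y + levenshtein C (x :: xs) ys) (C.substitute x y + levenshtein C xs ys))

/-- Edit distance: minimum number of single-symbol insertions, deletions and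
substitutions needed to transform `u` into `v` (Levenshtein distance with unit costs). -/
def ED {α : Type*} [DecidableEq α] (u v : List α) : ℕ :=
  levenshtein Levenshtein.defaultCost u v

lemma ED_nil_left {α : Type*} [DecidableEq α] (w : List α) : ED [] w = w.length := by
  induction w with
  | nil => simp [ED, levenshtein]
  | cons b w ih => simp_all [ED, levenshtein, Levenshtein.defaultCost]; omega

lemma ED_nil_right {α : Type*} [DecidableEq α] (u : List α) : ED u [] = u.length := by
  induction u with
  | nil => simp [ED, levenshtein]
  | cons a u ih => simp_all [ED, levenshtein, Levenshtein.defaultCost]; omega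

lemma ED_cons_cons {α : Type*} [DecidableEq α] (a b : α) (u w : List α) :
    ED (a :: u) (b :: w) =
      min (1 + ED u (b :: w)) (min (1 + ED (a :: u) w)
        ((if a = b then 0 else 1) + ED u w)) := by
  simp [ED, levenshtein, Levenshtein.defaultCost]

lemma ED_disjoint {α : Type*} [DecidableEq α] : ∀ (u w : List α),
    (∀ a ∈ u, ∀ b ∈ w, a ≠ b) → ED u w = max u.length w.length := by
  intro u
  induction u with
  | nil => intro w _; simp [ED_nil_left]
  | cons a u ihu =>
    intro w
    induction w with
    | nil => intro _; simp [ED_nil_right]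
    | cons b w ihw =>
      intro h
      have hab : a ≠ b := h a (by simp) b (by simp)
      have h1 : ED u (b :: w) = max u.length (w.length + 1) := by
        simpa using ihu (b :: w) (fun p hp q hq => h p (by simp [hp]) q hq)
      have h2 : ED (a :: u) w = max (u.length + 1) w.length := by
        simpa using ihw (fun p hp q hq => h p hp q (by simp [hq]))
      have h3 : ED u w = max u.length w.length := by
        exact ihu w (fun p hp q hq => h p (by simp [hp]) q (by simp [hq]))
      rw [ED_cons_cons, h1, h2, h3, if_neg hab]
      simp only [List.length_cons]
      omega

theorem stmt2 {α : Type*} [DecidableEq α] (n ℓ : ℕ) (x y u v : List α)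
    (hx : x.length = n) (hy : y.length = n)
    (hu : u.length = ℓ) (hv : v.length = ℓ)
    (huv : ∀ s, s ∈ u → s ∉ v)
    (huy : ∀ s, s ∈ u → s ∉ y)
    (hvx : ∀ s, s ∈ v → s ∉ x) :
    ED (x ++ u) (y ++ v) = ED x y + ℓ := by
  have hlen : u.length = v.length := by omega
  subst hu
  clear hx hy
  induction x generalizing y with
  | nil =>
    have hdisj : ∀ a ∈ u, ∀ b ∈ y ++ v, a ≠ b := by
      intro a ha b hb hab
      subst hab
      rcases List.mem_append.1 hb with hb | hb
      · exact huy a ha hb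
      · exact huv a ha hb
    rw [show ([] : List α) ++ u = u from rfl, ED_disjoint u (y ++ v) hdisj,
      ED_nil_left, List.length_append]
    omega
  | cons a x ihx =>
    induction y generalizing hvx with
    | nil =>
      have hdisj : ∀ p ∈ (a :: x) ++ u, ∀ q ∈ v, p ≠ q := by
        intro p hp q hq hpq
        subst hpq
        rcases List.mem_append.1 hp with hp | hp
        · exact hvx p hq hp
        · exact huv p hp hq
      rw [show ([] : List α) ++ v = v from rfl, ED_disjoint _ v hdisj, ED_nil_right, List.length_append]
      omega
    | cons b y ihy =>
      have huy' : ∀ s ∈ u, s ∉ y := fun s hs hy => huy s hs (by simp [hy])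
      have hvx' : ∀ s ∈ v, s ∉ x := fun s hs hx => hvx s hs (by simp [hx])
      have h1 : ED (x ++ u) ((b :: y) ++ v) = ED x (b :: y) + u.length :=
        ihx (b :: y) huy hvx'
      have h2 : ED ((a :: x) ++ u) (y ++ v) = ED (a :: x) y + u.length :=
        ihy huy' hvx
      have h3 : ED (x ++ u) (y ++ v) = ED x y + u.length :=
        ihx y huy' hvx'
      rw [List.cons_append, List.cons_append, ED_cons_cons, ED_cons_cons a b x y]
      rw [← List.cons_append, ← List.cons_append, h1, h2, h3]
      rcases eq_or_ne a b with hab | hab <;> simp [hab] <;> omega
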